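/- Let I be a database and I' its ∼-quotient with respect to ALCQ bisimilarity. Then for every a ∈ adom(I) and every index i, the element ⟨[a], i⟩ of I' is ALCQ bisimilar (across the disjoint union of I and I') to a in I; consequently a and ⟨[a], i⟩ satisfy the same ALCQ concepts. -/
import Mathlib


structure DB (CN RN Ind : Type) where
  concFact : CN → Ind → Prop
  roleFact : RN → Ind → Ind → Prop
  adom : Set Ind

def DB.succ {CN RN Ind : Type} (I : DB CN RN Ind) (r : RN) (a : Ind) : Set Ind :=
  {b | I.roleFact r a b}

def IsALCQBisim {CN RN Ind : Type} (I : DB CN RN Ind) (S : Ind → Ind → Prop) : Prop :=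
  (∀ a b, S a b → a ∈ I.adom ∧ b ∈ I.adom) ∧
  ∀ a b, S a b →
    (∀ A, I.concFact A a ↔ I.concFact A b) ∧
    (∀ r, ∀ D ⊆ I.succ r a, ∃ E ⊆ I.succ r b, ∃ f : Ind → Ind,
        Set.BijOn f D E ∧ ∀ d ∈ D, S d (f d)) ∧
    (∀ r, ∀ E ⊆ I.succ r b, ∃ D ⊆ I.succ r a, ∃ f : Ind → Ind,
        Set.BijOn f D E ∧ ∀ d ∈ D, S d (f d))

inductive ALCQ (CN RN : Type) : Type where
  | top : ALCQ CN RN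
  | atom (A : CN) : ALCQ CN RN
  | neg (C : ALCQ CN RN) : ALCQ CN RN
  | inter (C D : ALCQ CN RN) : ALCQ CN RN
  | ge (n : ℕ) (r : RN) (C : ALCQ CN RN) : ALCQ CN RN
  | le (n : ℕ) (r : RN) (C : ALCQ CN RN) : ALCQ CN RN

def ALCQ.sem {CN RN Ind : Type} (I : DB CN RN Ind) : ALCQ CN RN → Set Ind
  | .top => I.adom
  | .atom A => {a ∈ I.adom | I.concFact A a}
  | .neg C => I.adom \ C.sem I
  | .inter C D => C.sem I ∩ D.sem I
  | .ge n r C => {a ∈ I.adom | n ≤ (I.succ r a ∩ C.sem I).ncard}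
  | .le n r C => {a ∈ I.adom | (I.succ r a ∩ C.sem I).ncard ≤ n}

def Fits {CN RN Ind : Type} (I : DB CN RN Ind) (C : ALCQ CN RN)
    (P N : Set Ind) : Prop :=
  (∀ a ∈ P, a ∈ C.sem I) ∧ ∀ b ∈ N, b ∉ C.sem I

/-- `a` and `b` are ALCQ-bisimilar in `I`. -/
def Bisimilar {CN RN Ind : Type} (I : DB CN RN Ind) (a b : Ind) : Prop :=
  ∃ S : Ind → Ind → Prop, IsALCQBisim I S ∧ S a b

/-- The equivalence class `[a]` of `a` under the maximal ALCQ bisimulation. -/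
def cls {CN RN Ind : Type} (I : DB CN RN Ind) (a : Ind) : Set Ind :=
  {b | Bisimilar I a b}

/-- `max_{b ∈ adom(I), r} |succ_I^r(b) ∩ X|`. -/
noncomputable def maxCnt {CN RN Ind : Type} (I : DB CN RN Ind) (X : Set Ind) : ℕ :=
  sSup {n | ∃ b ∈ I.adom, ∃ r : RN, n = (I.succ r b ∩ X).ncard}

/-- The domain of the ∼-quotient: pairs `⟨[a], i⟩` with `1 ≤ i ≤ max_{b,r} |succ_I^r(b) ∩ [a]|`
(at least the copy `i = 1` is always present). -/
def qadom {CN RN Ind : Type} (I : DB CN RN Ind) : Set (Set Ind × ℕ) :=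
  {p | ∃ a ∈ I.adom, p.1 = cls I a ∧ 1 ≤ p.2 ∧ p.2 ≤ max 1 (maxCnt I p.1)}

/-- The ∼-quotient database `I'`. -/
noncomputable def quotDB {CN RN Ind : Type} (I : DB CN RN Ind) :
    DB CN RN (Set Ind × ℕ) where
  concFact := fun A p => p ∈ qadom I ∧ ∃ a, p.1 = cls I a ∧ I.concFact A a
  roleFact := fun r p q => p ∈ qadom I ∧ q ∈ qadom I ∧
    ∃ a, p.1 = cls I a ∧ q.2 ≤ (I.succ r a ∩ q.1).ncard
  adom := qadom I

/-- ALCQ bisimulations between two databases. -/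
def IsALCQBisim2 {CN RN Ind₁ Ind₂ : Type} (I : DB CN RN Ind₁) (J : DB CN RN Ind₂)
    (S : Ind₁ → Ind₂ → Prop) : Prop :=
  (∀ a b, S a b → a ∈ I.adom ∧ b ∈ J.adom) ∧
  ∀ a b, S a b →
    (∀ A, I.concFact A a ↔ J.concFact A b) ∧
    (∀ r, ∀ D ⊆ I.succ r a, ∃ E ⊆ J.succ r b, ∃ f : Ind₁ → Ind₂,
        Set.BijOn f D E ∧ ∀ d ∈ D, S d (f d)) ∧
    (∀ r, ∀ E ⊆ J.succ r b, ∃ D ⊆ I.succ r a, ∃ f : Ind₁ → Ind₂,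
        Set.BijOn f D E ∧ ∀ d ∈ D, S d (f d))

section Aux

open Set Function

variable {CN RN Ind : Type}

lemma sem_subset_adom (I : DB CN RN Ind) (C : ALCQ CN RN) : C.sem I ⊆ I.adom := by
  induction C with
  | top => exact subset_rfl
  | atom A => exact fun a ha => ha.1
  | neg C ih => exact fun a ha => ha.1
  | inter C D ihC ihD => exact fun a ha => ihC ha.1
  | ge n r C ih => exact fun a ha => ha.1
  | le n r C ih => exact fun a ha => ha.1

lemma exists_injOn_of_ncard_le {α β : Type} [Nonempty β] {S : Set α} {T : Set β}
    (hS : S.Finite) (hT : T.Finite) (h : S.ncard ≤ T.ncard) :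
    ∃ f : α → β, Set.InjOn f S ∧ f '' S ⊆ T := by
  haveI := hS.fintype
  haveI := hT.fintype
  have hcard : Fintype.card S ≤ Fintype.card T := by
    rwa [← Nat.card_eq_fintype_card, ← Nat.card_eq_fintype_card,
      Nat.card_coe_set_eq, Nat.card_coe_set_eq]
  obtain ⟨e⟩ := Function.Embedding.nonempty_of_card_le hcard
  classical
  refine ⟨fun a => if h : a ∈ S then (e ⟨a, h⟩ : β) else Classical.arbitrary β, ?_, ?_⟩
  · intro x hx y hy hxy
    simp only [dif_pos hx, dif_pos hy] at hxy
    have := e.injective (Subtype.ext hxy)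
    exact congrArg Subtype.val this
  · rintro _ ⟨x, hx, rfl⟩
    simp only [dif_pos hx]
    exact (e ⟨x, hx⟩).2

lemma bisim_refl (I : DB CN RN Ind)
    (hrole : ∀ r a b, I.roleFact r a b → a ∈ I.adom ∧ b ∈ I.adom) :
    IsALCQBisim I (fun x y => x = y ∧ x ∈ I.adom) := by
  constructor
  · rintro a b ⟨rfl, ha⟩; exact ⟨ha, ha⟩
  · rintro a b ⟨rfl, ha⟩
    refine ⟨fun A => Iff.rfl, fun r D hD => ?_, fun r E hE => ?_⟩
    · exact ⟨D, hD, id, Set.bijOn_id D,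
        fun d hd => ⟨rfl, (hrole r a d (hD hd)).2⟩⟩
    · exact ⟨E, hE, id, Set.bijOn_id E,
        fun d hd => ⟨rfl, (hrole r a d (hE hd)).2⟩⟩

lemma bisim_symm {I : DB CN RN Ind} {S : Ind → Ind → Prop} (hS : IsALCQBisim I S) :
    IsALCQBisim I (fun x y => S y x) := by
  refine ⟨fun a b h => ⟨(hS.1 b a h).2, (hS.1 b a h).1⟩, fun a b h => ?_⟩
  obtain ⟨hA, hforth, hback⟩ := hS.2 b a h
  haveI : Nonempty Ind := ⟨a⟩
  refine ⟨fun A => (hA A).symm, ?_, ?_⟩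
  · intro r D hD
    obtain ⟨D', hD', f, hbij, hrel⟩ := hback r D hD
    set f' := Function.invFunOn f D' with hf'
    have hinv := hbij.invOn_invFunOn
    refine ⟨D', hD', f', Set.BijOn.symm hinv.symm hbij, fun d hd => ?_⟩
    have hmem : f' d ∈ D' := Function.invFunOn_mem (by simpa using hbij.surjOn hd)
    have h1 := hrel (f' d) hmem
    have h2 : f (f' d) = d := hinv.2 hd
    rwa [h2] at h1
  · intro r E hE
    obtain ⟨E', hE', f, hbij, hrel⟩ := hforth r E hE
    set f' := Function.invFunOn f E with hf'
    have hinv := hbij.invOn_invFunOn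
    refine ⟨E', hE', f', Set.BijOn.symm hinv.symm hbij, fun d hd => ?_⟩
    have hmem : f' d ∈ E := Function.invFunOn_mem (by simpa using hbij.surjOn hd)
    have h1 := hrel (f' d) hmem
    have h2 : f (f' d) = d := hinv.2 hd
    rwa [h2] at h1

lemma bisim_comp {I : DB CN RN Ind} {S₁ S₂ : Ind → Ind → Prop}
    (h1 : IsALCQBisim I S₁) (h2 : IsALCQBisim I S₂) :
    IsALCQBisim I (fun x z => ∃ y, S₁ x y ∧ S₂ y z) := by
  constructor
  · rintro a c ⟨b, hab, hbc⟩; exact ⟨(h1.1 a b hab).1, (h2.1 b c hbc).2⟩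
  · rintro a c ⟨b, hab, hbc⟩
    obtain ⟨hA1, hf1, hb1⟩ := h1.2 a b hab
    obtain ⟨hA2, hf2, hb2⟩ := h2.2 b c hbc
    refine ⟨fun A => (hA1 A).trans (hA2 A), ?_, ?_⟩
    · intro r D hD
      obtain ⟨E, hE, f, hbij, hrel⟩ := hf1 r D hD
      obtain ⟨E', hE', g, hbij', hrel'⟩ := hf2 r E hE
      exact ⟨E', hE', g ∘ f, hbij'.comp hbij,
        fun d hd => ⟨f d, hrel d hd, hrel' (f d) (hbij.mapsTo hd)⟩⟩
    · intro r E' hE'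
      obtain ⟨E, hE, g, hbij', hrel'⟩ := hb2 r E' hE'
      obtain ⟨D, hD, f, hbij, hrel⟩ := hb1 r E hE
      exact ⟨D, hD, g ∘ f, hbij'.comp hbij,
        fun d hd => ⟨f d, hrel d hd, hrel' (f d) (hbij.mapsTo hd)⟩⟩

lemma bisimilar_refl {I : DB CN RN Ind}
    (hrole : ∀ r a b, I.roleFact r a b → a ∈ I.adom ∧ b ∈ I.adom)
    {a : Ind} (ha : a ∈ I.adom) : Bisimilar I a a :=
  ⟨_, bisim_refl I hrole, rfl, ha⟩

lemma bisimilar_symm {I : DB CN RN Ind} {a b : Ind} (h : Bisimilar I a b) :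
    Bisimilar I b a := by
  obtain ⟨S, hS, hab⟩ := h
  exact ⟨fun x y => S y x, bisim_symm hS, hab⟩

lemma bisimilar_trans {I : DB CN RN Ind} {a b c : Ind}
    (h1 : Bisimilar I a b) (h2 : Bisimilar I b c) : Bisimilar I a c := by
  obtain ⟨S₁, hS₁, hab⟩ := h1
  obtain ⟨S₂, hS₂, hbc⟩ := h2
  exact ⟨_, bisim_comp hS₁ hS₂, b, hab, hbc⟩

lemma cls_eq_of_bisimilar {I : DB CN RN Ind} {a b : Ind} (h : Bisimilar I a b) :
    cls I a = cls I b := by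
  ext x
  constructor
  · intro hx; exact bisimilar_trans (bisimilar_symm h) hx
  · intro hx; exact bisimilar_trans h hx

lemma bisimilar_of_cls_eq {I : DB CN RN Ind}
    (hrole : ∀ r a b, I.roleFact r a b → a ∈ I.adom ∧ b ∈ I.adom)
    {a b : Ind} (ha : a ∈ I.adom) (h : cls I b = cls I a) : Bisimilar I a b := by
  have : a ∈ cls I b := h ▸ bisimilar_refl hrole ha
  exact bisimilar_symm this

lemma bisimilar_adom {I : DB CN RN Ind} {a b : Ind} (h : Bisimilar I a b) :
    a ∈ I.adom ∧ b ∈ I.adom := by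
  obtain ⟨S, hS, hab⟩ := h
  exact hS.1 a b hab

lemma count_invar {I : DB CN RN Ind}
    (hfin : I.adom.Finite)
    (hrole : ∀ r a b, I.roleFact r a b → a ∈ I.adom ∧ b ∈ I.adom)
    {a a' : Ind} (h : Bisimilar I a a') (r : RN) (b : Ind) :
    (I.succ r a ∩ cls I b).ncard = (I.succ r a' ∩ cls I b).ncard := by
  have key : ∀ x y : Ind, Bisimilar I x y →
      (I.succ r x ∩ cls I b).ncard ≤ (I.succ r y ∩ cls I b).ncard := by
    intro x y ⟨S, hS, hxy⟩
    obtain ⟨-, hforth, -⟩ := hS.2 x y hxy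
    obtain ⟨E, hE, f, hbij, hrel⟩ := hforth r (I.succ r x ∩ cls I b) Set.inter_subset_left
    have hEsub : E ⊆ I.succ r y ∩ cls I b := by
      rw [← hbij.image_eq]
      rintro _ ⟨d, hd, rfl⟩
      exact ⟨hE (hbij.mapsTo hd), bisimilar_trans hd.2 ⟨S, hS, hrel d hd⟩⟩
    calc (I.succ r x ∩ cls I b).ncard = E.ncard := by
          rw [← hbij.image_eq, Set.ncard_image_of_injOn hbij.injOn]
      _ ≤ (I.succ r y ∩ cls I b).ncard := Set.ncard_le_ncard hEsub
          (hfin.subset (fun z hz => (hrole r y z hz.1).2))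
  exact le_antisymm (key a a' h) (key a' a (bisimilar_symm h))

lemma maxCnt_bddAbove (I : DB CN RN Ind) (hfin : I.adom.Finite)
    (hrole : ∀ r a b, I.roleFact r a b → a ∈ I.adom ∧ b ∈ I.adom) (X : Set Ind) :
    {n | ∃ b ∈ I.adom, ∃ r : RN, n = (I.succ r b ∩ X).ncard} ⊆ Set.Iic I.adom.ncard := by
  rintro n ⟨b, hb, r, rfl⟩
  exact Set.ncard_le_ncard (fun z hz => (hrole r b z hz.1).2) hfin

lemma le_maxCnt {I : DB CN RN Ind} (hfin : I.adom.Finite)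
    (hrole : ∀ r a b, I.roleFact r a b → a ∈ I.adom ∧ b ∈ I.adom)
    {a : Ind} (ha : a ∈ I.adom) (r : RN) (X : Set Ind) :
    (I.succ r a ∩ X).ncard ≤ maxCnt I X :=
  le_csSup ⟨I.adom.ncard, fun n hn => maxCnt_bddAbove I hfin hrole X hn⟩ ⟨a, ha, r, rfl⟩

lemma maxCnt_le {I : DB CN RN Ind} (hfin : I.adom.Finite)
    (hrole : ∀ r a b, I.roleFact r a b → a ∈ I.adom ∧ b ∈ I.adom) (X : Set Ind) :
    maxCnt I X ≤ I.adom.ncard :=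
  csSup_le' (fun n hn => maxCnt_bddAbove I hfin hrole X hn)

lemma qadom_finite (I : DB CN RN Ind) (hfin : I.adom.Finite)
    (hrole : ∀ r a b, I.roleFact r a b → a ∈ I.adom ∧ b ∈ I.adom) :
    (qadom I).Finite := by
  apply Set.Finite.subset (Set.Finite.prod (hfin.image (cls I))
    (Set.finite_Icc 1 (max 1 I.adom.ncard)))
  rintro ⟨X, i⟩ ⟨a, ha, h1, h2, h3⟩
  refine ⟨⟨a, ha, h1.symm⟩, h2, ?_⟩
  exact h3.trans (max_le_max le_rfl (maxCnt_le hfin hrole X))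

lemma qsucc_subset (I : DB CN RN Ind) (r : RN) (p : Set Ind × ℕ) :
    (quotDB I).succ r p ⊆ qadom I := fun q hq => hq.2.1

lemma count_eq_of_bisim2 {Ind₂ : Type} {I : DB CN RN Ind} {J : DB CN RN Ind₂}
    (hIfin : I.adom.Finite) (hJfin : J.adom.Finite)
    (hIsucc : ∀ r a, I.succ r a ⊆ I.adom)
    (hJsucc : ∀ r b, J.succ r b ⊆ J.adom)
    {S : Ind → Ind₂ → Prop} (hS : IsALCQBisim2 I J S)
    {C : ALCQ CN RN} (ih : ∀ a b, S a b → (a ∈ C.sem I ↔ b ∈ C.sem J))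
    (r : RN) (a : Ind) (b : Ind₂) (hab : S a b) :
    (I.succ r a ∩ C.sem I).ncard = (J.succ r b ∩ C.sem J).ncard := by
  obtain ⟨-, hforth, hback⟩ := hS.2 a b hab
  apply le_antisymm
  · obtain ⟨E, hE, f, hbij, hrel⟩ := hforth r (I.succ r a ∩ C.sem I) Set.inter_subset_left
    have hEsub : E ⊆ J.succ r b ∩ C.sem J := by
      rw [← hbij.image_eq]
      rintro _ ⟨d, hd, rfl⟩
      exact ⟨hE (hbij.mapsTo hd), (ih d (f d) (hrel d hd)).mp hd.2⟩
    calc (I.succ r a ∩ C.sem I).ncard = E.ncard := by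
          rw [← hbij.image_eq, Set.ncard_image_of_injOn hbij.injOn]
      _ ≤ _ := Set.ncard_le_ncard hEsub (hJfin.subset (fun z hz => hJsucc r b hz.1))
  · obtain ⟨D, hD, f, hbij, hrel⟩ := hback r (J.succ r b ∩ C.sem J) Set.inter_subset_left
    have hDsub : D ⊆ I.succ r a ∩ C.sem I := by
      intro d hd
      exact ⟨hD hd, (ih d (f d) (hrel d hd)).mpr (hbij.mapsTo hd).2⟩
    calc (J.succ r b ∩ C.sem J).ncard = D.ncard := by
          rw [← hbij.image_eq, Set.ncard_image_of_injOn hbij.injOn]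
      _ ≤ _ := Set.ncard_le_ncard hDsub (hIfin.subset (fun z hz => hIsucc r a hz.1))

lemma sem_iff_of_bisim2 {Ind₂ : Type} {I : DB CN RN Ind} {J : DB CN RN Ind₂}
    (hIfin : I.adom.Finite) (hJfin : J.adom.Finite)
    (hIsucc : ∀ r a, I.succ r a ⊆ I.adom)
    (hJsucc : ∀ r b, J.succ r b ⊆ J.adom)
    {S : Ind → Ind₂ → Prop} (hS : IsALCQBisim2 I J S) :
    ∀ C : ALCQ CN RN, ∀ a b, S a b → (a ∈ C.sem I ↔ b ∈ C.sem J) := by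
  intro C
  induction C with
  | top => exact fun a b hab => ⟨fun h => (hS.1 a b hab).2, fun h => (hS.1 a b hab).1⟩
  | atom A =>
    intro a b hab
    have h1 := hS.1 a b hab
    have h2 := (hS.2 a b hab).1 A
    exact ⟨fun h => ⟨h1.2, h2.mp h.2⟩, fun h => ⟨h1.1, h2.mpr h.2⟩⟩
  | neg C ih =>
    intro a b hab
    have h1 := hS.1 a b hab
    have h2 := ih a b hab
    exact ⟨fun h => ⟨h1.2, fun hc => h.2 (h2.mpr hc)⟩,
      fun h => ⟨h1.1, fun hc => h.2 (h2.mp hc)⟩⟩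
  | inter C D ihC ihD =>
    intro a b hab
    exact ⟨fun h => ⟨(ihC a b hab).mp h.1, (ihD a b hab).mp h.2⟩,
      fun h => ⟨(ihC a b hab).mpr h.1, (ihD a b hab).mpr h.2⟩⟩
  | ge n r C ih =>
    intro a b hab
    have h1 := hS.1 a b hab
    have hkey := count_eq_of_bisim2 hIfin hJfin hIsucc hJsucc hS ih r a b hab
    exact ⟨fun h => ⟨h1.2, hkey ▸ h.2⟩, fun h => ⟨h1.1, hkey ▸ h.2⟩⟩
  | le n r C ih =>
    intro a b hab
    have h1 := hS.1 a b hab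
    have hkey := count_eq_of_bisim2 hIfin hJfin hIsucc hJsucc hS ih r a b hab
    exact ⟨fun h => ⟨h1.2, hkey ▸ h.2⟩, fun h => ⟨h1.1, hkey ▸ h.2⟩⟩

lemma quot_bisim (I : DB CN RN Ind) (hfin : I.adom.Finite)
    (hrole : ∀ r a b, I.roleFact r a b → a ∈ I.adom ∧ b ∈ I.adom) :
    IsALCQBisim2 I (quotDB I)
      (fun a p => a ∈ I.adom ∧ p ∈ qadom I ∧ p.1 = cls I a) := by
  constructor
  · rintro a p ⟨ha, hp, -⟩; exact ⟨ha, hp⟩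
  · rintro a p ⟨ha, hp, hp1⟩
    refine ⟨?_, ?_, ?_⟩
    · intro A
      constructor
      · intro h; exact ⟨hp, a, hp1, h⟩
      · rintro ⟨-, b, hb1, hA⟩
        have hbis : Bisimilar I a b :=
          bisimilar_of_cls_eq hrole ha ((hb1.symm.trans hp1))
        obtain ⟨S, hS, hab⟩ := hbis
        exact ((hS.2 a b hab).1 A).mpr hA
    · -- forth
      intro r D hD
      have hDadom : D ⊆ I.adom := fun d hd => (hrole r a d (hD hd)).2
      have hchoice : ∀ X : Set Ind, ∃ φ : Ind → ℕ, Set.InjOn φ (D ∩ X) ∧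
          φ '' (D ∩ X) ⊆ Set.Icc 1 ((I.succ r a ∩ X).ncard) := by
        intro X
        apply exists_injOn_of_ncard_le (hfin.subset (fun d hd => hDadom hd.1))
          (Set.finite_Icc _ _)
        have h1 : (D ∩ X).ncard ≤ (I.succ r a ∩ X).ncard :=
          Set.ncard_le_ncard (Set.inter_subset_inter_left X hD)
            (hfin.subset (fun z hz => (hrole r a z hz.1).2))
        have h2 : (Set.Icc 1 ((I.succ r a ∩ X).ncard)).ncard
            = (I.succ r a ∩ X).ncard := by
          rw [← Finset.coe_Icc, Set.ncard_coe_finset, Nat.card_Icc]; omega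
        omega
      choose φ hφinj hφmem using hchoice
      set f : Ind → Set Ind × ℕ := fun d => (cls I d, φ (cls I d) d) with hf
      have hmem : ∀ d ∈ D, d ∈ D ∩ cls I d := fun d hd =>
        ⟨hd, bisimilar_refl hrole (hDadom hd)⟩
      have hicc : ∀ d ∈ D, φ (cls I d) d ∈ Set.Icc 1 ((I.succ r a ∩ cls I d).ncard) :=
        fun d hd => hφmem (cls I d) ⟨d, hmem d hd, rfl⟩
      have hqad : ∀ d ∈ D, f d ∈ qadom I := by
        intro d hd
        refine ⟨d, hDadom hd, rfl, (hicc d hd).1, ?_⟩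
        exact le_trans (hicc d hd).2 (le_max_of_le_right (le_maxCnt hfin hrole ha r _))
      have hinj : Set.InjOn f D := by
        intro d hd d' hd' he
        have h1 : cls I d = cls I d' := congrArg Prod.fst he
        have h2 : φ (cls I d) d = φ (cls I d) d' := by
          have h3 := congrArg Prod.snd he
          simp only [hf] at h3
          rw [← h1] at h3
          exact h3
        exact hφinj (cls I d) (hmem d hd) (by rw [h1]; exact hmem d' hd') h2
      refine ⟨f '' D, ?_, f, hinj.bijOn_image, fun d hd => ⟨hDadom hd, hqad d hd, rfl⟩⟩
      rintro _ ⟨d, hd, rfl⟩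
      exact ⟨hp, hqad d hd, a, hp1, (hicc d hd).2⟩
    · -- back
      intro r E hE
      haveI : Nonempty Ind := ⟨a⟩
      have hchoice : ∀ X : Set Ind, ∃ ψ : ℕ → Ind,
          Set.InjOn ψ (Set.Icc 1 ((I.succ r a ∩ X).ncard)) ∧
          ψ '' (Set.Icc 1 ((I.succ r a ∩ X).ncard)) ⊆ I.succ r a ∩ X := by
        intro X
        apply exists_injOn_of_ncard_le (Set.finite_Icc _ _)
          (hfin.subset (fun z hz => (hrole r a z hz.1).2))
        rw [← Finset.coe_Icc, Set.ncard_coe_finset, Nat.card_Icc]; omega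
      choose ψ hψinj hψmem using hchoice
      set g : Set Ind × ℕ → Ind := fun q => ψ q.1 q.2 with hg
      have hbisa : ∀ q ∈ E, q.2 ∈ Set.Icc 1 ((I.succ r a ∩ q.1).ncard)
          ∧ q ∈ qadom I := by
        intro q hq
        obtain ⟨-, hqad, a', ha', hcnt⟩ := hE hq
        have hqadcopy := hqad
        obtain ⟨b, hb, hq1, hq2, -⟩ := hqad
        have haa' : Bisimilar I a a' := bisimilar_of_cls_eq hrole ha (ha'.symm.trans hp1)
        have hcc : (I.succ r a' ∩ q.1).ncard = (I.succ r a ∩ q.1).ncard := by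
          rw [hq1]; exact (count_invar hfin hrole haa' r b).symm
        exact ⟨⟨hq2, hcc ▸ hcnt⟩, hqadcopy⟩
      have hgmem : ∀ q ∈ E, g q ∈ I.succ r a ∩ q.1 := fun q hq =>
        hψmem q.1 ⟨q.2, (hbisa q hq).1, rfl⟩
      have hclsg : ∀ q ∈ E, q.1 = cls I (g q) := by
        intro q hq
        obtain ⟨b, hb, hq1, -, -⟩ := (hbisa q hq).2
        have hbg : Bisimilar I b (g q) := by
          have := (hgmem q hq).2
          rw [hq1] at this
          exact this
        rw [hq1]; exact cls_eq_of_bisimilar hbg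
      have hinj : Set.InjOn g E := by
        intro q hq q' hq' he
        have h1 : q.1 = q'.1 := by
          rw [hclsg q hq, hclsg q' hq', he]
        have he0 : ψ q.1 q.2 = ψ q'.1 q'.2 := he
        rw [← h1] at he0
        have h2 : q.2 = q'.2 := by
          refine hψinj q.1 (hbisa q hq).1 ?_ he0
          rw [h1]; exact (hbisa q' hq').1
        exact Prod.ext h1 h2
      set f : Ind → Set Ind × ℕ := Function.invFunOn g E with hfdef
      have hleft : ∀ q ∈ E, f (g q) = q := fun q hq => hinj.leftInvOn_invFunOn hq
      refine ⟨g '' E, ?_, f, ⟨?_, ?_, ?_⟩, ?_⟩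
      · rintro _ ⟨q, hq, rfl⟩; exact (hgmem q hq).1
      · rintro _ ⟨q, hq, rfl⟩; rw [hleft q hq]; exact hq
      · rintro _ ⟨q, hq, rfl⟩ _ ⟨q', hq', rfl⟩ he
        rw [hleft q hq, hleft q' hq'] at he; rw [he]
      · intro q hq
        exact ⟨g q, ⟨q, hq, rfl⟩, hleft q hq⟩
      · rintro _ ⟨q, hq, rfl⟩
        rw [hleft q hq]
        exact ⟨(hrole r a (g q) (hgmem q hq).1).2, (hbisa q hq).2, hclsg q hq⟩

end Aux


theorem stmt9 {CN RN Ind : Type} (I : DB CN RN Ind)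
    (hfin : I.adom.Finite)
    (hrole : ∀ r a b, I.roleFact r a b → a ∈ I.adom ∧ b ∈ I.adom)
    (hconc : ∀ A a, I.concFact A a → a ∈ I.adom) :
    ∀ a ∈ I.adom, ∀ i : ℕ, 1 ≤ i → i ≤ max 1 (maxCnt I (cls I a)) →
      (∃ S, IsALCQBisim2 I (quotDB I) S ∧ S a (cls I a, i)) ∧
      ∀ C : ALCQ CN RN, a ∈ C.sem I ↔ (cls I a, i) ∈ C.sem (quotDB I) := by
  intro a ha i h1 h2
  have hq : (cls I a, i) ∈ qadom I := ⟨a, ha, rfl, h1, h2⟩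
  have hS := quot_bisim I hfin hrole
  have hrel : a ∈ I.adom ∧ (cls I a, i) ∈ qadom I ∧ (cls I a, i).1 = cls I a :=
    ⟨ha, hq, rfl⟩
  refine ⟨⟨_, hS, hrel⟩, fun C => ?_⟩
  exact sem_iff_of_bisim2 hfin (qadom_finite I hfin hrole)
    (fun r x d hd => (hrole r x d hd).2) (qsucc_subset I) hS C a _ hrel
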